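/- Let X be a finite-dimensional complex Banach space and T a nonzero nu-smooth operator. Then the numerical radius attainment set of T is M_{W(T)} = { (μx₀, conj(μ)x₀*) : |μ| = 1 } for some fixed pair (x₀, x₀*) with x₀ ∈ S_X and x₀* ∈ J(x₀). -/

import Mathlib

/-- The numerical radius of a bounded linear operator on a complex space. -/
noncomputable def nrad {X : Type*} [NormedAddCommGroup X] [NormedSpace ℂ X]
    (T : X →L[ℂ] X) : ℝ :=
  sSup {r : ℝ | ∃ (x : X) (f : X →L[ℂ] ℂ), ‖x‖ = 1 ∧ ‖f‖ = 1 ∧ f x = 1 ∧ r = ‖f (T x)‖}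

/-- The numerical radius attainment set of `T`. -/
noncomputable def MW {X : Type*} [NormedAddCommGroup X] [NormedSpace ℂ X]
    (T : X →L[ℂ] X) : Set (X × (X →L[ℂ] ℂ)) :=
  {p | ‖p.1‖ = 1 ∧ ‖p.2‖ = 1 ∧ p.2 p.1 = 1 ∧ ‖p.2 (T p.1)‖ = nrad T}

namespace NuSmoothAux

open ContinuousLinearMap

variable {X : Type*} [NormedAddCommGroup X] [NormedSpace ℂ X]

lemma nset_bdd (T : X →L[ℂ] X) :
    BddAbove {r : ℝ | ∃ (x : X) (f : X →L[ℂ] ℂ), ‖x‖ = 1 ∧ ‖f‖ = 1 ∧ f x = 1 ∧ r = ‖f (T x)‖} := by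
  refine ⟨‖T‖, fun r hr => ?_⟩
  obtain ⟨x, f, hx, hf, _, hr⟩ := hr
  calc r = ‖f (T x)‖ := hr
    _ ≤ ‖f‖ * ‖T x‖ := f.le_opNorm _
    _ ≤ ‖f‖ * (‖T‖ * ‖x‖) := by gcongr; exact T.le_opNorm x
    _ = ‖T‖ := by rw [hf, hx]; ring

lemma pair_le (T : X →L[ℂ] X) {x : X} {f : X →L[ℂ] ℂ} (hx : ‖x‖ = 1) (hf : ‖f‖ = 1)
    (hfx : f x = 1) : ‖f (T x)‖ ≤ nrad T :=
  le_csSup (nset_bdd T) ⟨x, f, hx, hf, hfx, rfl⟩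

lemma nrad_zero_le : nrad (0 : X →L[ℂ] X) ≤ 0 := by
  refine Real.sSup_le (fun r hr => ?_) le_rfl
  obtain ⟨x, f, _, _, _, hr⟩ := hr
  simp [hr]

variable [FiniteDimensional ℂ X]

lemma norm_le_norm_add_smul {T : X →L[ℂ] X} (h : nrad T = 0) (x : X) (lam : ℂ) :
    ‖x‖ ≤ ‖x + lam • T x‖ := by
  rcases eq_or_ne x 0 with rfl | hx0
  · simp
  obtain ⟨f, hf, hfx⟩ := exists_dual_vector ℂ x (norm_ne_zero_iff.mpr hx0)
  set c : ℂ := (‖x‖ : ℂ) with hc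
  have hcne : c ≠ 0 := by
    simpa [hc] using (norm_ne_zero_iff.mpr hx0)
  have hu : ‖c⁻¹ • x‖ = 1 := by
    rw [norm_smul, norm_inv, hc]
    simp [norm_ne_zero_iff.mpr hx0]
  have hfu : f (c⁻¹ • x) = 1 := by
    rw [map_smul, smul_eq_mul, hfx]; exact inv_mul_cancel₀ hcne
  have hTu : f (T (c⁻¹ • x)) = 0 := by
    have := pair_le T hu hf hfu
    rw [h] at this
    simpa using le_antisymm this (norm_nonneg _)
  have hfTx : f (T x) = 0 := by
    have : x = c • (c⁻¹ • x) := by rw [smul_smul, mul_inv_cancel₀ hcne, one_smul]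
    rw [this, map_smul, map_smul, smul_eq_mul, hTu, mul_zero]
  calc ‖x‖ = ‖f (x + lam • T x)‖ := by
        rw [map_add, map_smul, smul_eq_mul, hfTx, mul_zero, add_zero, hfx]
        simp
    _ ≤ ‖f‖ * ‖x + lam • T x‖ := f.le_opNorm _
    _ = ‖x + lam • T x‖ := by rw [hf, one_mul]

lemma unit_and_inv_norm {T : X →L[ℂ] X} (h : nrad T = 0) (lam : ℂ) :
    IsUnit (1 - lam • T) ∧ ‖Ring.inverse (1 - lam • T)‖ ≤ 1 := by
  set A : X →L[ℂ] X := 1 - lam • T with hA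
  have hAx : ∀ x : X, ‖x‖ ≤ ‖A x‖ := by
    intro x
    have := norm_le_norm_add_smul h x (-lam)
    simpa [hA, sub_eq_add_neg, sub_apply, smul_apply] using this
  have hinj : Function.Injective A := by
    intro x y hxy
    have : A (x - y) = 0 := by rw [map_sub, hxy, sub_self]
    have h2 := hAx (x - y)
    rw [this, norm_zero] at h2
    have := le_antisymm h2 (norm_nonneg _)
    rwa [norm_eq_zero, sub_eq_zero] at this
  have hsurj : Function.Surjective A :=
    (LinearMap.injective_iff_surjective (f := (A : X →ₗ[ℂ] X))).mp hinj
  have hbij : Function.Bijective A := ⟨hinj, hsurj⟩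
  let e : X ≃L[ℂ] X := (LinearEquiv.ofBijective (A : X →ₗ[ℂ] X) hbij).toContinuousLinearEquiv
  have he : ∀ z, e z = A z := fun z => rfl
  let u : (X →L[ℂ] X)ˣ :=
    ⟨A, (e.symm : X →L[ℂ] X), by ext x; simpa [he] using e.apply_symm_apply x,
      by ext x; simpa [he] using e.symm_apply_apply x⟩
  have hu : IsUnit A := ⟨u, rfl⟩
  refine ⟨hu, ?_⟩
  have hinv : Ring.inverse A = (e.symm : X →L[ℂ] X) := by
    have : Ring.inverse (u : X →L[ℂ] X) = ↑u⁻¹ := Ring.inverse_unit u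
    exact this
  rw [hinv]
  refine opNorm_le_bound _ zero_le_one (fun y => ?_)
  rw [one_mul]
  calc ‖e.symm y‖ ≤ ‖A (e.symm y)‖ := hAx _
    _ = ‖y‖ := by rw [← he, e.apply_symm_apply]

lemma eq_zero_of_nrad_zero {T : X →L[ℂ] X} (h : nrad T = 0) : T = 0 := by
  set F : ℂ → (X →L[ℂ] X) := fun lam => Ring.inverse (1 - lam • T) with hF
  have hd : Differentiable ℂ F := by
    intro lam
    exact DifferentiableAt.inverse
      ((differentiableAt_const (1 : X →L[ℂ] X)).sub
        ((differentiableAt_id).smul_const T)) (unit_and_inv_norm h lam).1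
  have hb : Bornology.IsBounded (Set.range F) := by
    refine Metric.isBounded_closedBall (x := (0 : X →L[ℂ] X)) (r := 1) |>.subset ?_
    rintro _ ⟨lam, rfl⟩
    rw [Metric.mem_closedBall, dist_zero_right]
    exact (unit_and_inv_norm h lam).2
  have h10 : F 1 = F 0 := hd.apply_eq_apply_of_bounded hb 1 0
  have hF0 : F 0 = 1 := by simp [hF]
  have hF1 : Ring.inverse (1 - T) = 1 := by
    have := h10.trans hF0
    simpa [hF] using this
  have hu := (unit_and_inv_norm h 1).1
  rw [one_smul] at hu
  have := Ring.mul_inverse_cancel _ hu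
  rw [hF1, mul_one] at this
  linear_combination (norm := abel1) -this

set_option maxHeartbeats 1000000 in
lemma exists_max [Nontrivial X] (T : X →L[ℂ] X) :
    ∃ (x : X) (f : X →L[ℂ] ℂ), ‖x‖ = 1 ∧ ‖f‖ = 1 ∧ f x = 1 ∧ ‖f (T x)‖ = nrad T := by
  set P : Set (X × (X →L[ℂ] ℂ)) := {p | ‖p.1‖ = 1 ∧ ‖p.2‖ = 1 ∧ p.2 p.1 = 1} with hP
  have hPne : P.Nonempty := by
    obtain ⟨x, hx⟩ := exists_norm_eq X (zero_le_one)
    obtain ⟨f, hf, hfx⟩ := exists_dual_vector ℂ x (by rw [← norm_ne_zero_iff, hx]; norm_num)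
    exact ⟨(x, f), hx, hf, by rw [hfx, hx]; norm_num⟩
  have hcont : Continuous fun p : X × (X →L[ℂ] ℂ) => p.2 (T p.1) := by
    have h1 : Continuous fun p : X × (X →L[ℂ] ℂ) => ((p.2, T p.1) :
        (X →L[ℂ] ℂ) × X) := (continuous_snd.prodMk (T.continuous.comp continuous_fst))
    exact isBoundedBilinearMap_apply.continuous.comp h1
  have hPc : IsCompact P := by
    have hclosed : IsClosed P := by
      have h1 : IsClosed {p : X × (X →L[ℂ] ℂ) | ‖p.1‖ = 1} :=
        isClosed_eq (continuous_fst.norm) continuous_const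
      have h2 : IsClosed {p : X × (X →L[ℂ] ℂ) | ‖p.2‖ = 1} :=
        isClosed_eq (continuous_snd.norm) continuous_const
      have h3 : IsClosed {p : X × (X →L[ℂ] ℂ) | p.2 p.1 = 1} := by
        refine isClosed_eq ?_ continuous_const
        have h4 : Continuous fun p : X × (X →L[ℂ] ℂ) => ((p.2, p.1) :
            (X →L[ℂ] ℂ) × X) := (continuous_snd.prodMk continuous_fst)
        exact isBoundedBilinearMap_apply.continuous.comp h4
      have hPeq : P = {p : X × (X →L[ℂ] ℂ) | ‖p.1‖ = 1} ∩
          ({p | ‖p.2‖ = 1} ∩ {p | p.2 p.1 = 1}) := by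
        ext p; simp [hP, Set.mem_setOf_eq, Set.mem_inter_iff, and_assoc]
      rw [hPeq]
      exact h1.inter (h2.inter h3)
    have hbdd : Bornology.IsBounded P := by
      refine (Metric.isBounded_closedBall (x := (0 : X × (X →L[ℂ] ℂ))) (r := 1)).subset ?_
      rintro p ⟨h1, h2, _⟩
      rw [Metric.mem_closedBall, dist_zero_right, Prod.norm_def, h1, h2]
      norm_num
    haveI : ProperSpace X := FiniteDimensional.proper ℂ X
    haveI : ProperSpace (X →L[ℂ] ℂ) := FiniteDimensional.proper ℂ _
    exact Metric.isCompact_of_isClosed_isBounded hclosed hbdd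
  obtain ⟨p, hpP, hpmax⟩ := hPc.exists_isMaxOn hPne (hcont.norm.continuousOn)
  obtain ⟨hp1, hp2, hp3⟩ := hpP
  refine ⟨p.1, p.2, hp1, hp2, hp3, le_antisymm (pair_le T hp1 hp2 hp3) ?_⟩
  refine Real.sSup_le (fun r hr => ?_) (norm_nonneg _)
  obtain ⟨x, f, hx, hf, hfx, rfl⟩ := hr
  exact isMaxOn_iff.mp hpmax (x, f) ⟨hx, hf, hfx⟩

end NuSmoothAux

open NuSmoothAux ContinuousLinearMap in
/-- on a finite-dimensional complex Banach space, if `T` is nonzero and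
nu-smooth, then `M_{W(T)} = { (μx₀, conj(μ)x₀*) : |μ| = 1 }` for some fixed pair
`(x₀, x₀*)` with `x₀ ∈ S_X` and `x₀* ∈ J(x₀)`. -/
theorem single_attainment_of_nu_smooth (X : Type*) [NormedAddCommGroup X]
    [NormedSpace ℂ X] [FiniteDimensional ℂ X] (T : X →L[ℂ] X) (hT : T ≠ 0)
    (hsmooth : ∀ A B : X →L[ℂ] X, (∀ lam : ℂ, nrad T ≤ nrad (T + lam • A)) →
      (∀ lam : ℂ, nrad T ≤ nrad (T + lam • B)) →
      (∀ lam : ℂ, nrad T ≤ nrad (T + lam • (A + B)))) :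
    ∃ (x₀ : X) (f₀ : X →L[ℂ] ℂ), ‖x₀‖ = 1 ∧ ‖f₀‖ = 1 ∧ f₀ x₀ = 1 ∧
      MW T = {p | ∃ μ : ℂ, ‖μ‖ = 1 ∧ p = (μ • x₀, (starRingEnd ℂ) μ • f₀)} := by
  -- X is nontrivial
  haveI : Nontrivial X := by
    by_contra hn
    haveI := not_nontrivial_iff_subsingleton.mp hn
    exact hT (by ext x; simp [Subsingleton.elim x 0])
  -- positivity of the numerical radius
  have hνpos : 0 < nrad T := by
    have h0 : 0 ≤ nrad T := by
      unfold nrad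
      exact Real.sSup_nonneg (by rintro r ⟨x, f, _, _, _, rfl⟩; positivity)
    rcases lt_or_eq_of_le h0 with h | h
    · exact h
    · exact absurd (eq_zero_of_nrad_zero h.symm) hT
  -- the maximizing pair
  obtain ⟨x₀, f₀, hx₀, hf₀, hfx₀, hmax⟩ := exists_max T
  set ν : ℝ := nrad T with hν
  -- uniqueness of the supporting functional
  have key : ∀ y g, (y, g) ∈ MW T → ∀ A : X →L[ℂ] X,
      (starRingEnd ℂ) (f₀ (T x₀)) * f₀ (A x₀) = (starRingEnd ℂ) (g (T y)) * g (A y) := by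
    intro y g hyg A
    obtain ⟨hy, hg, hgy, hgTy⟩ := hyg
    dsimp only at hy hg hgy hgTy
    by_contra hne
    set a : ℂ := (starRingEnd ℂ) (f₀ (T x₀)) with ha
    set b : ℂ := (starRingEnd ℂ) (g (T y)) with hb
    have hanorm : ‖a‖ = ν := by rw [ha, RCLike.norm_conj, hmax]
    have hbnorm : ‖b‖ = ν := by rw [hb, RCLike.norm_conj]; exact hgTy
    have hane : a ≠ 0 := by rw [← norm_ne_zero_iff, hanorm]; exact ne_of_gt hνpos
    have hbne : b ≠ 0 := by rw [← norm_ne_zero_iff, hbnorm]; exact ne_of_gt hνpos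
    set c₁ : ℂ := a * f₀ (A x₀) with hc₁
    set c₂ : ℂ := b * g (A y) with hc₂
    set B₁ : X →L[ℂ] X := ((ν : ℂ) ^ 2) • A - c₁ • T with hB₁
    set B₂ : X →L[ℂ] X := ((ν : ℂ) ^ 2) • A - c₂ • T with hB₂
    have haT : a * f₀ (T x₀) = (ν : ℂ) ^ 2 := by
      rw [ha, mul_comm, Complex.mul_conj, Complex.normSq_eq_norm_sq, hmax]
      push_cast; ring
    have hbT : b * g (T y) = (ν : ℂ) ^ 2 := by
      rw [hb, mul_comm, Complex.mul_conj, Complex.normSq_eq_norm_sq, hgTy,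
        ← hν]
      push_cast; ring
    have hfB₁ : f₀ (B₁ x₀) = 0 := by
      have h1 : f₀ (B₁ x₀) = (ν : ℂ) ^ 2 * f₀ (A x₀) - c₁ * f₀ (T x₀) := by
        simp [hB₁, sub_apply, smul_apply, map_smul, smul_eq_mul]
      have h2 : a * f₀ (B₁ x₀) = 0 := by
        rw [h1]
        linear_combination (-c₁) * haT - (ν : ℂ) ^ 2 * hc₁
      exact (mul_eq_zero.mp h2).resolve_left hane
    have hgB₂ : g (B₂ y) = 0 := by
      have h1 : g (B₂ y) = (ν : ℂ) ^ 2 * g (A y) - c₂ * g (T y) := by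
        simp [hB₂, sub_apply, smul_apply, map_smul, smul_eq_mul]
      have h2 : b * g (B₂ y) = 0 := by
        rw [h1]
        linear_combination (-c₂) * hbT - (ν : ℂ) ^ 2 * hc₂
      exact (mul_eq_zero.mp h2).resolve_left hbne
    have hperp₁ : ∀ lam : ℂ, nrad T ≤ nrad (T + lam • B₁) := by
      intro lam
      have : f₀ ((T + lam • B₁) x₀) = f₀ (T x₀) := by
        simp [add_apply, smul_apply, map_add, map_smul, hfB₁]
      calc nrad T = ‖f₀ ((T + lam • B₁) x₀)‖ := by rw [this, hmax]
        _ ≤ nrad (T + lam • B₁) := pair_le _ hx₀ hf₀ hfx₀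
    have hperp₂ : ∀ lam : ℂ, nrad T ≤ nrad (T + lam • (-B₂)) := by
      intro lam
      have : g ((T + lam • (-B₂)) y) = g (T y) := by
        simp [add_apply, smul_apply, map_add, map_smul, hgB₂]
      calc nrad T = ‖g ((T + lam • (-B₂)) y)‖ := by rw [this, hgTy]
        _ ≤ nrad (T + lam • (-B₂)) := pair_le _ hy hg hgy
    have hc : c₂ - c₁ ≠ 0 := by
      rw [sub_ne_zero]
      exact fun hcc => hne hcc.symm
    have hBB : B₁ + (-B₂) = (c₂ - c₁) • T := by
      rw [hB₁, hB₂]; module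
    have := hsmooth B₁ (-B₂) hperp₁ hperp₂ (-(c₂ - c₁)⁻¹)
    rw [hBB, smul_smul, neg_mul, inv_mul_cancel₀ hc] at this
    simp only [neg_smul, one_smul, add_neg_cancel] at this
    exact absurd (this.trans nrad_zero_le) (not_le.mpr hνpos)
  -- conclusion
  refine ⟨x₀, f₀, hx₀, hf₀, hfx₀, ?_⟩
  ext p
  obtain ⟨y, g⟩ := p
  constructor
  · intro hyg
    obtain ⟨hy, hg, hgy, hgTy⟩ := hyg
    dsimp only at hy hg hgy hgTy
    set a : ℂ := (starRingEnd ℂ) (f₀ (T x₀)) with ha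
    set b : ℂ := (starRingEnd ℂ) (g (T y)) with hb
    have hanorm : ‖a‖ = ν := by rw [ha, RCLike.norm_conj, hmax]
    have hbnorm : ‖b‖ = ν := by rw [hb, RCLike.norm_conj, hgTy, ← hν]
    have hane : a ≠ 0 := by rw [← norm_ne_zero_iff, hanorm]; exact ne_of_gt hνpos
    have hbne : b ≠ 0 := by rw [← norm_ne_zero_iff, hbnorm]; exact ne_of_gt hνpos
    have K : ∀ (h : X →L[ℂ] ℂ) (w : X), a * (h x₀ * f₀ w) = b * (h y * g w) := by
      intro h w
      have hK := key y g ⟨hy, hg, hgy, hgTy⟩ (h.smulRight w)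
      simpa only [← ha, ← hb, smulRight_apply, map_smul, smul_eq_mul] using hK
    set c0 : ℂ := b * g x₀ with hc0def
    have hv : a • x₀ = c0 • y := by
      by_contra hvne'
      have hvne : a • x₀ - c0 • y ≠ 0 := sub_ne_zero.mpr hvne'
      obtain ⟨h, hh, hhv⟩ := exists_dual_vector ℂ _ (norm_ne_zero_iff.mpr hvne)
      have h0 : h (a • x₀ - c0 • y) = 0 := by
        rw [map_sub, map_smul, map_smul, smul_eq_mul, smul_eq_mul]
        have hK := K h x₀
        rw [hfx₀] at hK
        linear_combination hK
      rw [hhv] at h0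
      exact hvne (norm_eq_zero.mp (Complex.ofReal_eq_zero.mp h0))
    have hc0 : ‖c0‖ = ν := by
      have h1 := congrArg norm hv
      rw [norm_smul, norm_smul, hx₀, hy, mul_one, mul_one] at h1
      rw [← h1, hanorm]
    have hc0ne : c0 ≠ 0 := by rw [← norm_ne_zero_iff, hc0]; exact ne_of_gt hνpos
    set μ : ℂ := a / c0 with hμdef
    have hμ : ‖μ‖ = 1 := by
      rw [hμdef, norm_div, hanorm, hc0]
      exact div_self (ne_of_gt hνpos)
    have hμne : μ ≠ 0 := by rw [← norm_ne_zero_iff, hμ]; norm_num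
    have hyμ : y = μ • x₀ := by
      have h1 : c0⁻¹ • (c0 • y) = c0⁻¹ • (a • x₀) := by rw [hv]
      rw [smul_smul, smul_smul, inv_mul_cancel₀ hc0ne, one_smul] at h1
      rw [h1]
      congr 1
      rw [hμdef, inv_mul_eq_div]
    have hcμ : c0 * μ = a := by rw [hμdef, mul_div_cancel₀ _ hc0ne]
    have hgw : ∀ w, g w = g x₀ * f₀ w := by
      intro w
      have hK := K f₀ w
      rw [hfx₀] at hK
      have hfy : f₀ y = μ := by rw [hyμ, map_smul, smul_eq_mul, hfx₀, mul_one]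
      rw [hfy] at hK
      have h2 : c0 * (a * (1 * f₀ w)) = c0 * (b * (μ * g w)) := by rw [hK]
      have h4 : b * a * g w = b * a * (g x₀ * f₀ w) := by
        linear_combination (-1 : ℂ) * h2 + (-(b * g w)) * hcμ + (a * f₀ w) * hc0def
      exact mul_left_cancel₀ (mul_ne_zero hbne hane) h4
    have hμconj : (starRingEnd ℂ) μ * μ = 1 := by
      rw [mul_comm, Complex.mul_conj, Complex.normSq_eq_norm_sq, hμ]
      norm_num
    have h5 : μ * g x₀ = 1 := by rw [← hgy, hyμ, map_smul, smul_eq_mul]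
    have hgx0 : g x₀ = (starRingEnd ℂ) μ := by
      apply mul_left_cancel₀ hμne
      rw [h5]
      linear_combination -hμconj
    refine ⟨μ, hμ, ?_⟩
    rw [Prod.mk.injEq]
    refine ⟨hyμ, ?_⟩
    ext w
    rw [hgw w, hgx0, ContinuousLinearMap.smul_apply, smul_eq_mul]
  · rintro ⟨μ, hμ, hp⟩
    have hμconj : (starRingEnd ℂ) μ * μ = 1 := by
      rw [mul_comm, Complex.mul_conj, Complex.normSq_eq_norm_sq, hμ]
      norm_num
    rw [hp]
    refine ⟨?_, ?_, ?_, ?_⟩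
    · show ‖μ • x₀‖ = 1
      rw [norm_smul, hμ, hx₀, mul_one]
    · show ‖(starRingEnd ℂ) μ • f₀‖ = 1
      rw [norm_smul ((starRingEnd ℂ) μ) f₀, RCLike.norm_conj, hμ, hf₀, mul_one]
    · show ((starRingEnd ℂ) μ • f₀) (μ • x₀) = 1
      rw [ContinuousLinearMap.smul_apply, map_smul, smul_eq_mul, smul_eq_mul, hfx₀, mul_one]
      exact hμconj
    · show ‖((starRingEnd ℂ) μ • f₀) (T (μ • x₀))‖ = nrad T
      have hval : ((starRingEnd ℂ) μ • f₀) (T (μ • x₀)) = f₀ (T x₀) := by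
        rw [ContinuousLinearMap.smul_apply, T.map_smul, map_smul, smul_eq_mul, smul_eq_mul]
        linear_combination f₀ (T x₀) * hμconj
      rw [hval, hmax]
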